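/- arXiv:1010.0279 — 2 statements merged into one kernel-verified Lean document; each statement's English description precedes it below -/
import Mathlib

section
/- For two coupled random regular graphs with one-to-one coupling, the 4×4 matrix M with entries M_{μν} = δ_{μν} − (σ_μ / Q_μ) ∂Q_μ/∂σ_ν (where μ, ν range over {aa, ab, ba, bb}, Q_aa = Q_ba = (z_a + σ_aa^{z_a}σ_ab)/(z_a+1), Q_ab = Q_bb = (z_b + σ_ba σ_bb^{z_b})/(z_b+1)) has determinant det M = [−z_b σ_aa^{z_a} σ_ab(σ_ba σ_bb^{z_b} − 1) + z_a(σ_aa^{z_a}σ_ab − 1)(−z_b + (z_b − 1)σ_ba σ_bb^{z_b})] / [(z_a + σ_aa^{z_a}σ_ab)(z_b + σ_ba σ_bb^{z_b})]. -/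
theorem detFinFour {R : Type*} [CommRing R] (M : Matrix (Fin 4) (Fin 4) R) :
    M.det =
      M 0 0 * (M 1 1 * (M 2 2 * M 3 3 - M 2 3 * M 3 2) - M 1 2 * (M 2 1 * M 3 3 - M 2 3 * M 3 1)
        + M 1 3 * (M 2 1 * M 3 2 - M 2 2 * M 3 1))
      - M 0 1 * (M 1 0 * (M 2 2 * M 3 3 - M 2 3 * M 3 2) - M 1 2 * (M 2 0 * M 3 3 - M 2 3 * M 3 0)
        + M 1 3 * (M 2 0 * M 3 2 - M 2 2 * M 3 0))
      + M 0 2 * (M 1 0 * (M 2 1 * M 3 3 - M 2 3 * M 3 1) - M 1 1 * (M 2 0 * M 3 3 - M 2 3 * M 3 0)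
        + M 1 3 * (M 2 0 * M 3 1 - M 2 1 * M 3 0))
      - M 0 3 * (M 1 0 * (M 2 1 * M 3 2 - M 2 2 * M 3 1) - M 1 1 * (M 2 0 * M 3 2 - M 2 2 * M 3 0)
        + M 1 2 * (M 2 0 * M 3 1 - M 2 1 * M 3 0)) := by
  rw [Matrix.det_succ_row_zero, Fin.sum_univ_four]
  simp [Matrix.det_fin_three, Matrix.submatrix_apply, Fin.succAbove,
    show ((2:Fin 3).castSucc : Fin 4) = 2 from rfl, show ((2:Fin 3).succ : Fin 4) = 3 from rfl,
    show ¬((2:Fin 4) < 2) from by decide, show ((2:Fin 4) < 3) from by decide,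
    show ((-1:R) ^ ((3:Fin 4):ℕ)) = -1 from by norm_num [show ((3:Fin 4):ℕ) = 3 from rfl]]
  ring

theorem det4frac {a b c e f g h i d1 d2 : ℝ} (h1 : d1 ≠ 0) (h2 : d2 ≠ 0) :
    (!![a/d1, b/d1, 0, 0; 0, 1, c/d2, e/d2; f/d1, g/d1, 1, 0; 0, 0, h/d2, i/d2] :
      Matrix (Fin 4) (Fin 4) ℝ).det
    = (a*i*d1*d2 - a*c*g*i + a*e*g*h + b*c*f*i - b*e*f*h) / (d1^2 * d2^2) := by
  rw [detFinFour]
  norm_num [Matrix.cons_val', Matrix.cons_val_zero, Matrix.cons_val_one, Matrix.head_cons,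
    Matrix.empty_val', Matrix.cons_val_fin_one, Matrix.head_fin_const, Matrix.cons_val_two,
    Matrix.tail_cons, Matrix.cons_val_three]
  field_simp
  ring

set_option maxHeartbeats 1000000 in
/-- For two coupled random regular graphs with one-to-one coupling,
the 4×4 matrix `M` with entries `M_{μν} = δ_{μν} − (σ_μ / Q_μ) ∂Q_μ/∂σ_ν`
(indices ordered `aa, ab, ba, bb`, with `Q_aa = Q_ba = (z_a + σ_aa^{z_a} σ_ab)/(z_a+1)`
and `Q_ab = Q_bb = (z_b + σ_ba σ_bb^{z_b})/(z_b+1)`) has determinant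
`[−z_b σ_aa^{z_a} σ_ab(σ_ba σ_bb^{z_b} − 1)
  + z_a(σ_aa^{z_a} σ_ab − 1)(−z_b + (z_b−1) σ_ba σ_bb^{z_b})]
 / [(z_a + σ_aa^{z_a} σ_ab)(z_b + σ_ba σ_bb^{z_b})]`. -/
theorem one_to_one_determinant
    (za zb : ℕ) (hza : 1 ≤ za) (hzb : 1 ≤ zb)
    (σaa σab σba σbb : ℝ)
    (hDa : (za : ℝ) + σaa ^ za * σab ≠ 0)
    (hDb : (zb : ℝ) + σba * σbb ^ zb ≠ 0)
    (M : Matrix (Fin 4) (Fin 4) ℝ)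
    (hM : M = !![
      ((za : ℝ) + σaa ^ za * σab - za * σaa ^ za * σab) / ((za : ℝ) + σaa ^ za * σab),
        -(σaa ^ (za + 1)) / ((za : ℝ) + σaa ^ za * σab), 0, 0;
      0, 1, -(σab * σbb ^ zb) / ((zb : ℝ) + σba * σbb ^ zb),
        -((zb : ℝ) * σab * σba * σbb ^ (zb - 1)) / ((zb : ℝ) + σba * σbb ^ zb);
      -((za : ℝ) * σaa ^ (za - 1) * σab * σba) / ((za : ℝ) + σaa ^ za * σab),
        -(σaa ^ za * σba) / ((za : ℝ) + σaa ^ za * σab), 1, 0;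
      0, 0, -(σbb ^ (zb + 1)) / ((zb : ℝ) + σba * σbb ^ zb),
        ((zb : ℝ) + σba * σbb ^ zb - zb * σba * σbb ^ zb) / ((zb : ℝ) + σba * σbb ^ zb)]) :
    M.det = (-(zb : ℝ) * σaa ^ za * σab * (σba * σbb ^ zb - 1)
        + (za : ℝ) * (σaa ^ za * σab - 1) * (-(zb : ℝ) + ((zb : ℝ) - 1) * (σba * σbb ^ zb)))
      / (((za : ℝ) + σaa ^ za * σab) * ((zb : ℝ) + σba * σbb ^ zb)) := by
  obtain ⟨k, rfl⟩ : ∃ k, za = k + 1 := ⟨za - 1, (Nat.succ_pred_eq_of_pos hza).symm⟩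
  obtain ⟨l, rfl⟩ : ∃ l, zb = l + 1 := ⟨zb - 1, (Nat.succ_pred_eq_of_pos hzb).symm⟩
  subst hM
  rw [det4frac hDa hDb, div_eq_div_iff (by positivity) (mul_ne_zero hDa hDb)]
  simp only [pow_succ, Nat.add_sub_cancel]
  push_cast
  ring
end

section
/- For the two-coupled-regular-graph system with one-to-one coupling (intra-degrees z_a, z_b ≥ 1), the 2×2 mean matrix of the toppling branch distributions, computed from U_a(τ_a,τ_b) = (τ_a+z_a)^{z_a}(τ_b+z_b)/((z_a+1)^{z_a}(z_b+1)) and U_b(τ_a,τ_b) = (τ_a+z_a)(τ_b+z_b)^{z_b}/((z_a+1)(z_b+1)^{z_b}), is M = [[z_a/(z_a+1), 1/(z_b+1)], [1/(z_a+1), z_b/(z_b+1)]], where M_{11} = ∂_{τ_a}U_a(1,1), M_{12} = ∂_{τ_b}U_a(1,1), M_{21} = ∂_{τ_a}U_b(1,1), M_{22} = ∂_{τ_b}U_b(1,1); moreover the column sums of M^T (i.e., M_{11}+M_{21} and M_{12}+M_{22}) are both 1, so 1 is an eigenvalue of M and the two-type toppling branching process is exactly critical. -/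
lemma deriv_pow_aux (c k d : ℝ) (n : ℕ) :
    deriv (fun x : ℝ => (x + c) ^ n * k / d) 1 = n * (1 + c) ^ (n - 1) * k / d := by
  have h : HasDerivAt (fun x : ℝ => (x + c) ^ n * k / d)
      ((n : ℝ) * (1 + c) ^ (n - 1) * 1 * k / d) 1 :=
    ((((hasDerivAt_id 1).add_const c).pow n).mul_const k).div_const d
  simpa using h.deriv

lemma deriv_lin_aux (c k d : ℝ) :
    deriv (fun x : ℝ => k * (x + c) / d) 1 = k / d := by
  have h : HasDerivAt (fun x : ℝ => k * (x + c) / d) (k * 1 / d) 1 :=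
    (((hasDerivAt_id 1).add_const c).const_mul k).div_const d
  simpa using h.deriv

/-- For the two-coupled-regular-graph system with one-to-one coupling
(intra-degrees `z_a, z_b ≥ 1`), the 2×2 mean matrix of the toppling branch
distributions, computed from
`U_a(τ_a,τ_b) = (τ_a+z_a)^{z_a}(τ_b+z_b)/((z_a+1)^{z_a}(z_b+1))` and
`U_b(τ_a,τ_b) = (τ_a+z_a)(τ_b+z_b)^{z_b}/((z_a+1)(z_b+1)^{z_b})`, is
`M = [[z_a/(z_a+1), 1/(z_b+1)], [1/(z_a+1), z_b/(z_b+1)]]`; the column sums of `Mᵀ`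
are both `1`, so `1` is an eigenvalue of `M`: the two-type toppling branching process
is exactly critical. -/
theorem one_to_one_mean_matrix_critical
    (za zb : ℕ) (hza : 1 ≤ za) (hzb : 1 ≤ zb)
    (M : Matrix (Fin 2) (Fin 2) ℝ)
    (hM : M = !![(za : ℝ) / (za + 1), 1 / ((zb : ℝ) + 1);
                 1 / ((za : ℝ) + 1), (zb : ℝ) / (zb + 1)]) :
    (deriv (fun τa : ℝ =>
        (τa + za) ^ za * ((1 : ℝ) + zb) / (((za : ℝ) + 1) ^ za * ((zb : ℝ) + 1))) 1
      = M 0 0) ∧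
    (deriv (fun τb : ℝ =>
        ((1 : ℝ) + za) ^ za * (τb + zb) / (((za : ℝ) + 1) ^ za * ((zb : ℝ) + 1))) 1
      = M 0 1) ∧
    (deriv (fun τa : ℝ =>
        (τa + za) * ((1 : ℝ) + zb) ^ zb / (((za : ℝ) + 1) * ((zb : ℝ) + 1) ^ zb)) 1
      = M 1 0) ∧
    (deriv (fun τb : ℝ =>
        ((1 : ℝ) + za) * (τb + zb) ^ zb / (((za : ℝ) + 1) * ((zb : ℝ) + 1) ^ zb)) 1
      = M 1 1) ∧
    (M 0 0 + M 1 0 = 1 ∧ M 0 1 + M 1 1 = 1) ∧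
    (∃ v : Fin 2 → ℝ, v ≠ 0 ∧ Matrix.vecMul v M = v) := by
  obtain ⟨ma, rfl⟩ : ∃ m, za = m + 1 := ⟨za - 1, (Nat.succ_pred_eq_of_pos hza).symm⟩
  obtain ⟨mb, rfl⟩ : ∃ m, zb = m + 1 := ⟨zb - 1, (Nat.succ_pred_eq_of_pos hzb).symm⟩
  have hza0 : ((ma : ℝ) + 1 + 1) ≠ 0 := by positivity
  have hzb0 : ((mb : ℝ) + 1 + 1) ≠ 0 := by positivity
  have hza0' : ((ma : ℝ) + 1 + 1) ^ ma ≠ 0 := pow_ne_zero _ hza0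
  have hzb0' : ((mb : ℝ) + 1 + 1) ^ mb ≠ 0 := pow_ne_zero _ hzb0
  subst hM
  refine ⟨?_, ?_, ?_, ?_, ⟨?_, ?_⟩, ⟨![1, 1], ?_, ?_⟩⟩
  · rw [deriv_pow_aux]
    simp only [Nat.cast_add, Nat.cast_one, add_tsub_cancel_right, one_div, Fin.isValue,
      Matrix.of_apply, Matrix.cons_val', Matrix.cons_val_zero, Matrix.empty_val',
      Matrix.cons_val_fin_one]
    rw [pow_succ]
    field_simp
    ring
  · rw [deriv_lin_aux]
    simp
    field_simp
    ring
  · rw [show (fun τa : ℝ =>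
        (τa + ((ma + 1 : ℕ) : ℝ)) * ((1 : ℝ) + ((mb + 1 : ℕ) : ℝ)) ^ (mb + 1) /
          ((((ma + 1 : ℕ) : ℝ) + 1) * (((mb + 1 : ℕ) : ℝ) + 1) ^ (mb + 1))) =
        (fun τa : ℝ => (τa + ((ma + 1 : ℕ) : ℝ)) ^ 1 * ((1 : ℝ) + ((mb + 1 : ℕ) : ℝ)) ^ (mb + 1) /
          ((((ma + 1 : ℕ) : ℝ) + 1) * (((mb + 1 : ℕ) : ℝ) + 1) ^ (mb + 1))) by
      funext x; rw [pow_one]]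
    rw [deriv_pow_aux]
    simp
    field_simp
    ring
  · rw [show (fun τb : ℝ =>
        ((1 : ℝ) + ((ma + 1 : ℕ) : ℝ)) * (τb + ((mb + 1 : ℕ) : ℝ)) ^ (mb + 1) /
          ((((ma + 1 : ℕ) : ℝ) + 1) * (((mb + 1 : ℕ) : ℝ) + 1) ^ (mb + 1))) =
        (fun τb : ℝ => (τb + ((mb + 1 : ℕ) : ℝ)) ^ (mb + 1) * ((1 : ℝ) + ((ma + 1 : ℕ) : ℝ)) /
          ((((ma + 1 : ℕ) : ℝ) + 1) * (((mb + 1 : ℕ) : ℝ) + 1) ^ (mb + 1))) by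
      funext x; ring_nf]
    rw [deriv_pow_aux]
    simp only [Nat.cast_add, Nat.cast_one, add_tsub_cancel_right, one_div, Fin.isValue,
      Matrix.of_apply, Matrix.cons_val', Matrix.cons_val_zero, Matrix.empty_val',
      Matrix.cons_val_fin_one, Matrix.cons_val_one, Matrix.head_cons, Matrix.head_fin_const]
    rw [pow_succ]
    field_simp
    ring
  · simp
    field_simp
  · simp
    field_simp
    ring
  · intro h
    have := congrFun h 0
    simp at this
  · funext j
    fin_cases j <;>
      simp [Matrix.vecMul, dotProduct, Fin.sum_univ_two] <;> field_simp <;> ring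
end
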